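/- arXiv:2105.12150 — 2 statements merged into one kernel-verified Lean document; each statement's English description precedes it below -/
import Mathlib

section
/- In a median graph, two Θ-classes E_i and E_j are orthogonal if and only if the four boundary intersections ∂H_i' ∩ ∂H_j', ∂H_i'' ∩ ∂H_j', ∂H_i' ∩ ∂H_j'' and ∂H_i'' ∩ ∂H_j'' are all nonempty. -/
namespace MedianPaper

variable {V : Type*}

/-- The metric interval `I(u,v)`: vertices on shortest `(u,v)`-paths. -/
def interval (G : SimpleGraph V) (u v : V) : Set V :=
  {w | G.dist u w + G.dist w v = G.dist u v}

/-- A median graph: a connected graph in which every triple of vertices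
has a unique median. -/
def MedianGraph (G : SimpleGraph V) : Prop :=
  G.Connected ∧ ∀ x y z : V, ∃! m : V,
    m ∈ interval G x y ∧ m ∈ interval G y z ∧ m ∈ interval G z x

/-- `u v x y` span a 4-cycle `u-v-y-x-u`, with opposite edge pairs
`(uv, xy)` and `(ux, vy)`. -/
def IsSquare (G : SimpleGraph V) (u v x y : V) : Prop :=
  G.Adj u v ∧ G.Adj x y ∧ G.Adj u x ∧ G.Adj v y ∧ u ≠ y ∧ v ≠ x

/-- Two edges are in relation Θ₀ if they are opposite edges of a common 4-cycle. -/
def Theta0 (G : SimpleGraph V) (e f : Sym2 V) : Prop :=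
  ∃ u v x y : V, IsSquare G u v x y ∧ e = s(u, v) ∧ f = s(x, y)

/-- Θ : the reflexive-transitive closure of Θ₀ on the edges of `G`. -/
def Theta (G : SimpleGraph V) (e f : Sym2 V) : Prop :=
  e ∈ G.edgeSet ∧ f ∈ G.edgeSet ∧ Relation.ReflTransGen (Theta0 G) e f

/-- The Θ-classes of `G`: equivalence classes of edges under Θ. -/
def ThetaClass (G : SimpleGraph V) (C : Set (Sym2 V)) : Prop :=
  ∃ e ∈ G.edgeSet, C = {f | Theta G e f}

/-- The edge set `C` separates `u` from `v` : they lie in different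
components of `G` minus `C`. -/
def Separates (G : SimpleGraph V) (C : Set (Sym2 V)) (u v : V) : Prop :=
  ¬ (G.deleteEdges C).Reachable u v

/-- The signature `σ_{u,v}`: Θ-classes separating `u` from `v`. -/
def signature (G : SimpleGraph V) (u v : V) : Set (Set (Sym2 V)) :=
  {C | ThetaClass G C ∧ Separates G C u v}

/-- `H`, `H'` are the two connected components (halfspaces) of `G` deprived
of the edges in `C`. -/
def IsHalfspacePair (G : SimpleGraph V) (C : Set (Sym2 V)) (H H' : Set V) : Prop :=
  H.Nonempty ∧ H'.Nonempty ∧ Disjoint H H' ∧ H ∪ H' = Set.univ ∧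
  (∀ x ∈ H, ∀ y ∈ H, (G.deleteEdges C).Reachable x y) ∧
  (∀ x ∈ H', ∀ y ∈ H', (G.deleteEdges C).Reachable x y) ∧
  (∀ x ∈ H, ∀ y ∈ H', ¬ (G.deleteEdges C).Reachable x y)

/-- The boundary of a halfspace `H` of the Θ-class `C` : vertices of `H`
incident to an edge of `C`. -/
def boundarySet (G : SimpleGraph V) (C : Set (Sym2 V)) (H : Set V) : Set V :=
  {x | x ∈ H ∧ ∃ y, G.Adj x y ∧ s(x, y) ∈ C}

/-- Orthogonality of Θ-classes: there is a common square using both. -/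
def Orthogonal (G : SimpleGraph V) (C₁ C₂ : Set (Sym2 V)) : Prop :=
  ∃ u v x y : V, IsSquare G u v x y ∧
    s(u, v) ∈ C₁ ∧ s(x, y) ∈ C₁ ∧ s(u, x) ∈ C₂ ∧ s(v, y) ∈ C₂

/-- A pairwise orthogonal family (POF) of Θ-classes. -/
def IsPOF (G : SimpleGraph V) (X : Set (Set (Sym2 V))) : Prop :=
  (∀ C ∈ X, ThetaClass G C) ∧
  ∀ C ∈ X, ∀ C' ∈ X, C ≠ C' → Orthogonal G C C'

/-- The `k`-dimensional hypercube graph, on subsets of `{1,…,k}`;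
two subsets are adjacent iff their symmetric difference has one element. -/
def cubeGraph (k : ℕ) : SimpleGraph (Finset (Fin k)) where
  Adj A B := (symmDiff A B).card = 1
  symm := by
    constructor
    intro A B h
    rwa [symmDiff_comm] at h
  loopless := by
    constructor
    intro A h
    simp [symmDiff_self] at h

/-- `S` induces a hypercube of dimension `k` in `G`. -/
def IsCubeDim (G : SimpleGraph V) (S : Set V) (k : ℕ) : Prop :=
  Nonempty ((G.induce S) ≃g cubeGraph k)

/-- `S` induces a hypercube in `G`. -/
def IsInducedCube (G : SimpleGraph V) (S : Set V) : Prop :=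
  ∃ k, IsCubeDim G S k

/-- The dimension of `G` is `d`: the largest dimension of an induced hypercube. -/
def GraphDim (G : SimpleGraph V) (d : ℕ) : Prop :=
  (∃ S : Set V, IsCubeDim G S d) ∧ ∀ (S : Set V) (k : ℕ), IsCubeDim G S k → k ≤ d

/-- The Θ-classes of the edges of the induced subgraph on `S`. -/
def cubeClasses (G : SimpleGraph V) (S : Set V) : Set (Set (Sym2 V)) :=
  {C | ThetaClass G C ∧ ∃ x ∈ S, ∃ y ∈ S, G.Adj x y ∧ s(x, y) ∈ C}

/-- With the `v₀`-orientation, `b ∈ S` is the basis of `S`: all edges of `S`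
incident to `b` are outgoing from `b`. -/
def IsBasis (G : SimpleGraph V) (v₀ : V) (S : Set V) (b : V) : Prop :=
  b ∈ S ∧ ∀ w ∈ S, G.Adj b w → G.dist v₀ b < G.dist v₀ w

/-- With the `v₀`-orientation, `b ∈ S` is the anti-basis of `S`: all edges of `S`
incident to `b` are ingoing to `b`. -/
def IsAntiBasis (G : SimpleGraph V) (v₀ : V) (S : Set V) (b : V) : Prop :=
  b ∈ S ∧ ∀ w ∈ S, G.Adj b w → G.dist v₀ w < G.dist v₀ b

/-- `ℰ⁻(v)` : the Θ-classes containing at least one edge ingoing to `v`. -/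
def inClasses (G : SimpleGraph V) (v₀ v : V) : Set (Set (Sym2 V)) :=
  {C | ThetaClass G C ∧ ∃ u, G.Adj u v ∧ G.dist v₀ u < G.dist v₀ v ∧ s(u, v) ∈ C}

/-- The ladder set `L_{u,v}`: classes of the signature `σ_{u,v}` having an
edge incident to `u`. -/
def ladder (G : SimpleGraph V) (u v : V) : Set (Set (Sym2 V)) :=
  {C | C ∈ signature G u v ∧ ∃ w, G.Adj u w ∧ s(u, w) ∈ C}

/-- A POF each of whose classes has an edge outgoing from `u`. -/
def OutgoingPOF (G : SimpleGraph V) (v₀ u : V) (L : Set (Set (Sym2 V))) : Prop :=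
  IsPOF G L ∧ ∀ C ∈ L, ∃ w, G.Adj u w ∧ G.dist v₀ u < G.dist v₀ w ∧ s(u, w) ∈ C

/-- A POF each of whose classes has an edge ingoing to `u`. -/
def IngoingPOF (G : SimpleGraph V) (v₀ u : V) (X : Set (Set (Sym2 V))) : Prop :=
  IsPOF G X ∧ ∀ C ∈ X, ∃ w, G.Adj w u ∧ G.dist v₀ w < G.dist v₀ u ∧ s(w, u) ∈ C

/-- `m` is a median of the triple `x, y, z`. -/
def IsMedian (G : SimpleGraph V) (x y z m : V) : Prop :=
  m ∈ interval G x y ∧ m ∈ interval G y z ∧ m ∈ interval G z x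

/-- `b` is the milestone following `a` on the way to `v`: `b` is the anti-basis of
the induced hypercube with basis `a` whose Θ-classes are the ladder set `L_{a,v}`. -/
def NextMilestone (G : SimpleGraph V) (v₀ v a b : V) : Prop :=
  ∃ S : Set V, IsInducedCube G S ∧ IsBasis G v₀ S a ∧ IsAntiBasis G v₀ S b ∧
    cubeClasses G S = ladder G a v

/-- The milestone set `Π(u,v)`: vertices obtained from `u` by iterating the
next-milestone step towards `v`. -/
def MilestoneSet (G : SimpleGraph V) (v₀ u v : V) : Set V :=
  {p | Relation.ReflTransGen (fun a b => NextMilestone G v₀ v a b) u p}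

/-- The penultimate milestone `π̄(u,v)`: the milestone of `Π(u,v)` other than `v`
closest to `v`, i.e. whose next milestone is `v` itself. -/
def IsPenultimate (G : SimpleGraph V) (v₀ u v p : V) : Prop :=
  p ∈ MilestoneSet G v₀ u v ∧ p ≠ v ∧ NextMilestone G v₀ v p v

/-- A convex set of vertices. -/
def ConvexSet (G : SimpleGraph V) (H : Set V) : Prop :=
  ∀ u ∈ H, ∀ v ∈ H, interval G u v ⊆ H

/-- A gated set of vertices: each vertex has a gate in `H`. -/
def GatedSet (G : SimpleGraph V) (H : Set V) : Prop :=
  ∀ x : V, ∃ g ∈ H, ∀ h ∈ H, g ∈ interval G x h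


section Aux

variable {G : SimpleGraph V} {a b : V}

/-- The halfspace of vertices strictly closer to `a` than to `b`. -/
def Wside (G : SimpleGraph V) (a b : V) : Set V := {w | G.dist w a < G.dist w b}

lemma med_exists (hmed : MedianGraph G) (x y z : V) :
    ∃ m : V, m ∈ interval G x y ∧ m ∈ interval G y z ∧ m ∈ interval G z x :=
  (hmed.2 x y z).exists

lemma med_eq (hmed : MedianGraph G) {x y z m₁ m₂ : V}
    (h₁ : m₁ ∈ interval G x y ∧ m₁ ∈ interval G y z ∧ m₁ ∈ interval G z x)
    (h₂ : m₂ ∈ interval G x y ∧ m₂ ∈ interval G y z ∧ m₂ ∈ interval G z x) :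
    m₁ = m₂ := by
  obtain ⟨n, -, hu⟩ := hmed.2 x y z
  rw [hu m₁ h₁, hu m₂ h₂]

lemma mem_interval {u v w : V} :
    w ∈ interval G u v ↔ G.dist u w + G.dist w v = G.dist u v := Iff.rfl

lemma dc (G : SimpleGraph V) (x y : V) : G.dist x y = G.dist y x := SimpleGraph.dist_comm

lemma dist_eq_zero (hc : G.Connected) {u v : V} (h : G.dist u v = 0) : u = v :=
  (hc.dist_eq_zero_iff).mp h

lemma adj_of_dist_eq_one {u v : V} (h : G.dist u v = 1) : G.Adj u v :=
  SimpleGraph.dist_eq_one_iff_adj.mp h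

lemma dist_of_adj {u v : V} (h : G.Adj u v) : G.dist u v = 1 :=
  SimpleGraph.dist_eq_one_iff_adj.mpr h

/-- "Bipartite" lemma: distances from a fixed vertex to the two ends of an
edge are distinct. -/
lemma dist_ne_of_adj (hmed : MedianGraph G) {u v : V} (h : G.Adj u v) (w : V) :
    G.dist w u ≠ G.dist w v := by
  intro he
  obtain ⟨m, h1, h2, h3⟩ := med_exists hmed u v w
  rw [mem_interval] at h1 h2 h3
  rw [dist_of_adj h] at h1
  rcases Nat.le_one_iff_eq_zero_or_eq_one.mp (Nat.le.intro h1 : G.dist u m ≤ 1) with h0 | h0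
  · -- m = u
    have : u = m := dist_eq_zero hmed.1 h0
    subst this
    rw [SimpleGraph.dist_self, Nat.zero_add] at h1
    -- h2 : dist v u + dist u w = dist v w
    rw [dc G v u, dist_of_adj h] at h2
    rw [dc G w u, dc G w v] at he
    omega
  · have h0' : G.dist m v = 0 := by omega
    have hmv : m = v := dist_eq_zero hmed.1 h0'
    rw [hmv] at h3
    rw [dc G v u, dist_of_adj h] at h3
    omega

lemma adj_dist_cases (hmed : MedianGraph G) {u v : V} (h : G.Adj u v) (w : V) :
    G.dist w u + 1 = G.dist w v ∨ G.dist w v + 1 = G.dist w u := by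
  have h1 : G.dist w v ≤ G.dist w u + 1 := by
    have := hmed.1.dist_triangle (u := w) (v := u) (w := v)
    rwa [dist_of_adj h] at this
  have h2 : G.dist w u ≤ G.dist w v + 1 := by
    have := hmed.1.dist_triangle (u := w) (v := v) (w := u)
    rwa [dist_of_adj h.symm] at this
  have h3 := dist_ne_of_adj hmed h w
  omega

lemma wside_iff (hmed : MedianGraph G) (hab : G.Adj a b) {w : V} :
    w ∈ Wside G a b ↔ G.dist w a + 1 = G.dist w b := by
  rcases adj_dist_cases hmed hab w with h | h <;>
    simp only [Wside, Set.mem_setOf_eq] <;> omega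

lemma side_dichot (hmed : MedianGraph G) (hab : G.Adj a b) (w : V) :
    w ∈ Wside G a b ∨ w ∈ Wside G b a := by
  rcases adj_dist_cases hmed hab w with h | h
  · exact Or.inl (by simp only [Wside, Set.mem_setOf_eq]; omega)
  · exact Or.inr (by simp only [Wside, Set.mem_setOf_eq]; omega)

lemma not_both_sides {w : V} (h1 : w ∈ Wside G a b) (h2 : w ∈ Wside G b a) : False := by
  simp only [Wside, Set.mem_setOf_eq] at h1 h2; omega

lemma cross_dists (hmed : MedianGraph G) (hab : G.Adj a b) {u v : V} (huv : G.Adj u v)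
    (hu : u ∈ Wside G a b) (hv : v ∈ Wside G b a) :
    G.dist v a = G.dist u a + 1 ∧ G.dist u b = G.dist v b + 1 := by
  have h1 := (wside_iff hmed hab).mp hu
  have h2 := (wside_iff hmed hab.symm).mp hv
  have h3 := adj_dist_cases hmed huv a
  have h4 := adj_dist_cases hmed huv b
  rw [dc G a u, dc G a v] at h3
  rw [dc G b u, dc G b v] at h4
  omega

lemma exists_step (hc : G.Connected) {u a : V} (h : G.dist u a ≠ 0) :
    ∃ u₁ : V, G.Adj u u₁ ∧ G.dist u₁ a + 1 = G.dist u a := by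
  obtain ⟨p, hp⟩ := SimpleGraph.exists_walk_of_dist_ne_zero h
  cases p with
  | nil => simp at h
  | @cons _ x _ hux q =>
    refine ⟨x, hux, ?_⟩
    have h1 : G.dist x a ≤ q.length := SimpleGraph.dist_le q
    have h2 : G.dist u a ≤ 1 + G.dist x a := by
      have := hc.dist_triangle (u := u) (v := x) (w := a)
      rwa [dist_of_adj hux] at this
    simp only [SimpleGraph.Walk.length_cons] at hp
    omega

lemma dist_two (hc : G.Connected) {p q w : V} (h1 : G.Adj w p) (h2 : G.Adj w q)
    (hne : p ≠ q) (hnadj : ¬ G.Adj p q) : G.dist p q = 2 := by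
  have hle : G.dist p q ≤ 2 := by
    have := hc.dist_triangle (u := p) (v := w) (w := q)
    rw [dc G p w, dist_of_adj h1, dist_of_adj h2] at this
    omega
  have h0 : G.dist p q ≠ 0 := fun h => hne (dist_eq_zero hc h)
  have h1' : G.dist p q ≠ 1 := fun h => hnadj (adj_of_dist_eq_one h)
  omega

/-- The median of two vertices at distance 2 equidistant from `t`, is a common
neighbour one step closer to `t`. -/
lemma med_cn (hmed : MedianGraph G) {p q t : V} (hpq : G.dist p q = 2)
    (h : G.dist p t = G.dist q t) :
    ∃ m : V, G.Adj p m ∧ G.Adj q m ∧ G.dist m t + 1 = G.dist p t := by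
  obtain ⟨m, h1, h2, h3⟩ := med_exists hmed p q t
  rw [mem_interval] at h1 h2 h3
  rw [dc G t m, dc G t p, dc G m p] at h3
  rw [dc G m q] at h1
  rw [hpq] at h1
  have e1 : G.dist p m = 1 := by omega
  have e2 : G.dist q m = 1 := by omega
  exact ⟨m, adj_of_dist_eq_one e1, adj_of_dist_eq_one e2, by omega⟩

lemma adj_cases (hmed : MedianGraph G) {u v : V} (h : G.Adj u v) (w : V) :
    G.dist u w + 1 = G.dist v w ∨ G.dist v w + 1 = G.dist u w := by
  have := adj_dist_cases hmed h w
  rw [dc G w u, dc G w v] at this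
  exact this

lemma no_two (hmed : MedianGraph G) (hab : G.Adj a b) {u u' y : V} (huu' : G.Adj u u')
    (hu : u ∈ Wside G a b) (hu' : u' ∈ Wside G b a) (hy : y ∈ Wside G a b)
    (h2 : G.dist u y = 2) (h1 : G.Adj u' y) : False := by
  have hc := hmed.1
  have hub := (wside_iff hmed hab).mp hu
  have hcr := cross_dists hmed hab huu' hu hu'
  have hyab := (wside_iff hmed hab).mp hy
  have hy1 := adj_cases hmed h1 a
  have hy2 := adj_cases hmed h1 b
  have hya : G.dist y a = G.dist u a := by omega
  have hk : G.dist u a ≠ 0 := by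
    intro h0
    have e1 : u = a := dist_eq_zero hc h0
    have e2 : y = a := dist_eq_zero hc (by omega)
    rw [e1, e2, SimpleGraph.dist_self] at h2
    omega
  obtain ⟨μ, hum, hym, hma⟩ := med_cn hmed h2 (t := a) (by omega)
  have hmb := adj_cases hmed hum b
  have hμab : μ ∈ Wside G a b := by simp only [Wside, Set.mem_setOf_eq]; omega
  have hμb := (wside_iff hmed hab).mp hμab
  have hmu' : G.dist μ u' = 2 := by
    apply dist_two hc hum huu'
    · intro he; exact not_both_sides (he ▸ hμab) hu'
    · intro hadj; rcases adj_cases hmed hadj a with h | h <;> omega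
  obtain ⟨ρ, hμρ, hu'ρ, hrb⟩ := med_cn hmed hmu' (t := b) (by omega)
  have hra1 := adj_cases hmed hμρ a
  have hra2 := adj_cases hmed hu'ρ a
  have hρu : G.dist ρ u = 2 := by
    apply dist_two hc hμρ hum.symm
    · intro he; rw [he] at hrb; omega
    · intro hadj; rcases adj_cases hmed hadj b with h | h <;> omega
  have hρy : G.dist ρ y = 2 := by
    apply dist_two hc hμρ hym.symm
    · intro he; rw [he] at hrb; omega
    · intro hadj; rcases adj_cases hmed hadj b with h | h <;> omega
  -- unit distances
  have e1 : G.dist u μ = 1 := dist_of_adj hum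
  have e2 : G.dist μ u = 1 := by rw [dc]; exact e1
  have e3 : G.dist y μ = 1 := dist_of_adj hym
  have e4 : G.dist μ y = 1 := by rw [dc]; exact e3
  have e5 : G.dist μ ρ = 1 := dist_of_adj hμρ
  have e6 : G.dist ρ μ = 1 := by rw [dc]; exact e5
  have e7 : G.dist u' ρ = 1 := dist_of_adj hu'ρ
  have e8 : G.dist ρ u' = 1 := by rw [dc]; exact e7
  have e9 : G.dist u u' = 1 := dist_of_adj huu'
  have e10 : G.dist u' u = 1 := by rw [dc]; exact e9
  have e11 : G.dist u' y = 1 := dist_of_adj h1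
  have e12 : G.dist y u' = 1 := by rw [dc]; exact e11
  have e13 : G.dist y ρ = 2 := by rw [dc]; exact hρy
  have e14 : G.dist ρ u = 2 := hρu
  have heq : μ = u' := by
    refine med_eq hmed (x := u) (y := y) (z := ρ) ⟨?_, ?_, ?_⟩ ⟨?_, ?_, ?_⟩ <;>
      simp only [mem_interval] <;> omega
  exact not_both_sides (heq ▸ hμab) hu'

lemma key_aux (hmed : MedianGraph G) (hab : G.Adj a b) :
    ∀ k : ℕ, ∀ u u' y : V, G.Adj u u' → u ∈ Wside G a b → u' ∈ Wside G b a →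
      y ∈ Wside G a b → G.dist u a = k → G.dist u' y = G.dist u y + 1 := by
  intro k
  induction k using Nat.strong_induction_on with
  | _ k IH =>
    intro u u' y huu' hu hu' hy hka
    have hc := hmed.1
    rcases adj_cases hmed huu' y with hgood | hbad
    · exact hgood.symm
    exfalso
    have hub := (wside_iff hmed hab).mp hu
    have hcr := cross_dists hmed hab huu' hu hu'
    have hyy := (wside_iff hmed hab).mp hy
    by_cases h0 : G.dist u' y = 0
    · exact not_both_sides ((dist_eq_zero hc h0) ▸ hu') hy
    by_cases h1 : G.dist u' y = 1
    · exact no_two hmed hab huu' hu hu' hy (by omega) (adj_of_dist_eq_one h1)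
    have hk0 : G.dist u a ≠ 0 := by
      intro hz
      have hua : u = a := dist_eq_zero hc hz
      have hub' : u' = b := dist_eq_zero hc (by omega)
      rw [hua, hub', dc G b y, dc G a y] at hbad
      omega
    obtain ⟨u₁, hu1adj, hu1a⟩ := exists_step hc hk0
    have h1b := adj_cases hmed hu1adj b
    have hu1ab : u₁ ∈ Wside G a b := by simp only [Wside, Set.mem_setOf_eq]; omega
    have hu1b := (wside_iff hmed hab).mp hu1ab
    have h12 : G.dist u₁ u' = 2 := by
      apply dist_two hc hu1adj huu'
      · intro he; exact not_both_sides (he ▸ hu1ab) hu'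
      · intro hadj; rcases adj_cases hmed hadj a with h | h <;> omega
    rcases adj_cases hmed hu1adj y with hA | hB
    · -- d u₁ y = d u y + 1
      obtain ⟨m, hm1, hm2, hmb⟩ := med_cn hmed h12 (t := b) (by omega)
      have hma1 := adj_cases hmed hm1 a
      have hma2 := adj_cases hmed hm2 a
      have hmy1 := adj_cases hmed hm1 y
      have hmy2 := adj_cases hmed hm2 y
      have hmba : m ∈ Wside G b a := by simp only [Wside, Set.mem_setOf_eq]; omega
      have := IH (G.dist u₁ a) (by omega) u₁ m y hm1 hu1ab hmba hy rfl
      omega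
    · -- d u₁ y + 1 = d u y
      obtain ⟨m, hm1, hm2, hmy⟩ := med_cn hmed h12 (t := y) (by omega)
      have hma1 := adj_cases hmed hm1 a
      have hma2 := adj_cases hmed hm2 a
      rcases side_dichot hmed hab m with hmW | hmW
      · have hmu2 : G.dist m u = 2 := by
          apply dist_two hc hm1 hu1adj.symm
          · intro he; rw [he] at hmy; omega
          · intro hadj; rcases adj_cases hmed hadj a with h | h <;> omega
        exact no_two hmed hab hm2.symm hmW hu' hu hmu2 huu'.symm
      · have := IH (G.dist u₁ a) (by omega) u₁ m y hm1 hu1ab hmW hy rfl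
        omega

lemma key (hmed : MedianGraph G) (hab : G.Adj a b) {u u' y : V} (huu' : G.Adj u u')
    (hu : u ∈ Wside G a b) (hu' : u' ∈ Wside G b a) (hy : y ∈ Wside G a b) :
    G.dist u' y = G.dist u y + 1 :=
  key_aux hmed hab (G.dist u a) u u' y huu' hu hu' hy rfl

lemma wside_convex_aux (hmed : MedianGraph G) (hab : G.Adj a b) :
    ∀ n : ℕ, ∀ u w y : V, u ∈ Wside G a b → y ∈ Wside G a b →
      G.dist u w + G.dist w y = G.dist u y → G.dist u w = n → w ∈ Wside G a b := by
  intro n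
  induction n using Nat.strong_induction_on with
  | _ n IH =>
    intro u w y hu hy hiv hn
    by_cases h0 : G.dist u w = 0
    · exact (dist_eq_zero hmed.1 h0) ▸ hu
    obtain ⟨u₁, hadj, hstep⟩ := exists_step hmed.1 h0
    have htri : G.dist u₁ y ≤ G.dist u₁ w + G.dist w y := hmed.1.dist_triangle
    have htri2 : G.dist u y ≤ 1 + G.dist u₁ y := by
      have := hmed.1.dist_triangle (u := u) (v := u₁) (w := y)
      rwa [dist_of_adj hadj] at this
    have hu1y : G.dist u₁ y + 1 = G.dist u y := by omega
    have hu1W : u₁ ∈ Wside G a b := by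
      rcases side_dichot hmed hab u₁ with h | h
      · exact h
      · have := key hmed hab hadj hu h hy
        omega
    exact IH (G.dist u₁ w) (by omega) u₁ w y hu1W hy (by omega) rfl

lemma wside_convex (hmed : MedianGraph G) (hab : G.Adj a b) {u w y : V}
    (hu : u ∈ Wside G a b) (hy : y ∈ Wside G a b)
    (hiv : G.dist u w + G.dist w y = G.dist u y) : w ∈ Wside G a b :=
  wside_convex_aux hmed hab (G.dist u w) u w y hu hy hiv rfl

/-- The set of edges crossing the cut between `Wside G a b` and `Wside G b a`. -/
def crossSet (G : SimpleGraph V) (a b : V) : Set (Sym2 V) :=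
  {e | ∃ u v : V, e = s(u, v) ∧ G.Adj u v ∧ u ∈ Wside G a b ∧ v ∈ Wside G b a}

lemma mem_crossSet {u v : V} (huv : G.Adj u v) (hu : u ∈ Wside G a b)
    (hv : v ∈ Wside G b a) : s(u, v) ∈ crossSet G a b := ⟨u, v, rfl, huv, hu, hv⟩

lemma crossSet_comm : crossSet G a b = crossSet G b a := by
  ext e
  constructor <;> rintro ⟨u, v, rfl, h, h1, h2⟩ <;>
    exact ⟨v, u, Sym2.eq_swap.symm, h.symm, h2, h1⟩

lemma cross_elim {p q : V} (h : s(p, q) ∈ crossSet G a b) :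
    (p ∈ Wside G a b ∧ q ∈ Wside G b a) ∨ (q ∈ Wside G a b ∧ p ∈ Wside G b a) := by
  obtain ⟨u, v, he, -, h1, h2⟩ := h
  rcases Sym2.eq_iff.mp he with ⟨rfl, rfl⟩ | ⟨rfl, rfl⟩
  · exact Or.inl ⟨h1, h2⟩
  · exact Or.inr ⟨h1, h2⟩

lemma self_mem_wside (hab : G.Adj a b) : a ∈ Wside G a b := by
  show G.dist a a < G.dist a b
  rw [SimpleGraph.dist_self, dc G a b, dist_of_adj hab.symm]
  omega

lemma descent_aux (hmed : MedianGraph G) (hab : G.Adj a b) :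
    ∀ k : ℕ, ∀ x y : V, G.Adj x y → x ∈ Wside G a b → y ∈ Wside G b a →
      G.dist x a = k → Relation.ReflTransGen (Theta0 G) s(a, b) s(x, y) := by
  intro k
  induction k using Nat.strong_induction_on with
  | _ k IH =>
    intro x y hxy hx hy hk
    have hc := hmed.1
    have hxb := (wside_iff hmed hab).mp hx
    have hcr := cross_dists hmed hab hxy hx hy
    by_cases h0 : G.dist x a = 0
    · have hxa : x = a := dist_eq_zero hc h0
      have hyb : y = b := dist_eq_zero hc (by omega)
      rw [hxa, hyb]
    obtain ⟨x₁, hx1adj, hx1a⟩ := exists_step hc h0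
    have h1b := adj_cases hmed hx1adj b
    have hx1W : x₁ ∈ Wside G a b := by simp only [Wside, Set.mem_setOf_eq]; omega
    have hx1b := (wside_iff hmed hab).mp hx1W
    have h12 : G.dist x₁ y = 2 := by
      apply dist_two hc hx1adj hxy
      · intro he; exact not_both_sides (he ▸ hx1W) hy
      · intro hadj; rcases adj_cases hmed hadj a with h | h <;> omega
    obtain ⟨y₁, hy1, hy2, hy1b⟩ := med_cn hmed h12 (t := b) (by omega)
    have ha1 := adj_cases hmed hy1 a
    have ha2 := adj_cases hmed hy2 a
    have hy1W : y₁ ∈ Wside G b a := by simp only [Wside, Set.mem_setOf_eq]; omega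
    have step : Theta0 G s(x₁, y₁) s(x, y) :=
      ⟨x₁, y₁, x, y,
        ⟨hy1, hxy, hx1adj.symm, hy2.symm,
          fun he => not_both_sides (he ▸ hx1W) hy,
          fun he => not_both_sides hx (he ▸ hy1W)⟩, rfl, rfl⟩
    exact (IH (G.dist x₁ a) (by omega) x₁ y₁ hy1 hx1W hy1W rfl).tail step

lemma theta0_cross (hmed : MedianGraph G) (hab : G.Adj a b) {e f : Sym2 V}
    (he : e ∈ crossSet G a b) (h0 : Theta0 G e f) : f ∈ crossSet G a b := by
  obtain ⟨u, v, x, y, ⟨huv, hxy, hux, hvy, huy, hvx⟩, rfl, rfl⟩ := h0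
  have hc := hmed.1
  have hne_uy : ¬ G.Adj u y := fun hadj =>
    (dist_ne_of_adj hmed hadj v)
      (by rw [dc G v u, dist_of_adj huv, dist_of_adj hvy])
  have hne_vx : ¬ G.Adj v x := fun hadj =>
    (dist_ne_of_adj hmed hadj u)
      (by rw [dist_of_adj huv, dist_of_adj hux])
  have duy2 : G.dist u y = 2 := dist_two hc huv.symm hvy huy hne_uy
  have dvx2 : G.dist v x = 2 := dist_two hc huv hux hvx hne_vx
  have euv : G.dist u v = 1 := dist_of_adj huv
  have evy : G.dist v y = 1 := dist_of_adj hvy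
  have evu : G.dist v u = 1 := by rw [dc]; exact euv
  have eux : G.dist u x = 1 := dist_of_adj hux
  rcases cross_elim he with ⟨hu, hv⟩ | ⟨hv, hu⟩ <;>
    rcases side_dichot hmed hab x with hxW | hxW <;>
    rcases side_dichot hmed hab y with hyW | hyW
  · -- u ∈ Wab, v ∈ Wba, x ∈ Wab, y ∈ Wab : v ∈ I(u,y) contra
    exact absurd (wside_convex hmed hab hu hyW (by omega)) fun h => not_both_sides h hv
  · exact mem_crossSet hxy hxW hyW
  · rw [Sym2.eq_swap]; exact mem_crossSet hxy.symm hyW hxW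
  · -- x, y ∈ Wba : u ∈ I(v,x) with v,x ∈ Wba
    exact absurd (wside_convex hmed hab.symm hv hxW (by omega)) fun h => not_both_sides hu h
  · -- v ∈ Wab, u ∈ Wba, x,y ∈ Wab : u ∈ I(v,x)
    exact absurd (wside_convex hmed hab hv hxW (by omega)) fun h => not_both_sides h hu
  · exact mem_crossSet hxy hxW hyW
  · rw [Sym2.eq_swap]; exact mem_crossSet hxy.symm hyW hxW
  · -- x,y ∈ Wba : v ∈ I(u,y) with u,y ∈ Wba
    exact absurd (wside_convex hmed hab.symm hu hyW (by omega)) fun h => not_both_sides hv h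

lemma theta0_symm : Symmetric (Theta0 G) := by
  rintro e f ⟨u, v, x, y, ⟨h1, h2, h3, h4, h5, h6⟩, rfl, rfl⟩
  exact ⟨x, y, u, v, ⟨h2, h1, h3.symm, h4.symm, h6.symm, h5.symm⟩, rfl, rfl⟩

lemma theta_class_eq (hmed : MedianGraph G) (hab : G.Adj a b) :
    {f | Theta G s(a, b) f} = crossSet G a b := by
  ext f
  simp only [Set.mem_setOf_eq]
  constructor
  · rintro ⟨-, -, hrtg⟩
    induction hrtg with
    | refl => exact mem_crossSet hab (self_mem_wside hab) (self_mem_wside hab.symm)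
    | tail h1 h2 ih => exact theta0_cross hmed hab ih h2
  · rintro ⟨u, v, rfl, huv, hu, hv⟩
    exact ⟨(G.mem_edgeSet).mpr hab, (G.mem_edgeSet).mpr huv,
      descent_aux hmed hab (G.dist u a) u v huv hu hv rfl⟩

lemma walk_same_side (hmed : MedianGraph G) (hab : G.Adj a b) :
    ∀ {x y : V} (_ : (G.deleteEdges (crossSet G a b)).Walk x y),
      x ∈ Wside G a b → y ∈ Wside G a b := by
  intro x y p
  induction p with
  | nil => exact id
  | @cons x' z y' h q ih =>
    intro hx
    rw [SimpleGraph.deleteEdges_adj] at h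
    rcases side_dichot hmed hab z with hz | hz
    · exact ih hz
    · exact absurd (mem_crossSet h.1 hx hz) h.2

lemma no_cross_reach (hmed : MedianGraph G) (hab : G.Adj a b) {x y : V}
    (hx : x ∈ Wside G a b) (hy : y ∈ Wside G b a)
    (h : (G.deleteEdges (crossSet G a b)).Reachable x y) : False := by
  obtain ⟨p⟩ := h
  exact not_both_sides (walk_same_side hmed hab p hx) hy

lemma halfspacepair_symm {C : Set (Sym2 V)} {H H' : Set V}
    (h : IsHalfspacePair G C H H') : IsHalfspacePair G C H' H := by
  obtain ⟨h1, h2, h3, h4, h5, h6, h7⟩ := h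
  exact ⟨h2, h1, h3.symm, by rw [Set.union_comm]; exact h4, h6, h5,
    fun x hx y hy hr => h7 y hy x hx hr.symm⟩

lemma halfspace_id_aux (hmed : MedianGraph G) (hab : G.Adj a b) {H H' : Set V}
    (h : IsHalfspacePair G (crossSet G a b) H H') (ha : a ∈ H) :
    H = Wside G a b ∧ H' = Wside G b a := by
  obtain ⟨hne, hne', hdisj, hcov, hH, hH', hsep⟩ := h
  have hbH' : b ∈ H' := by
    have hb : b ∈ H ∪ H' := hcov ▸ Set.mem_univ b
    rcases hb with hb | hb
    · exact absurd (hH a ha b hb)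
        fun hr => no_cross_reach hmed hab (self_mem_wside hab) (self_mem_wside hab.symm) hr
    · exact hb
  have hsub : ∀ x ∈ H, x ∈ Wside G a b := fun x hx =>
    (side_dichot hmed hab x).resolve_right fun hw =>
      no_cross_reach hmed hab (self_mem_wside hab) hw (hH a ha x hx)
  have hsub' : ∀ x ∈ H', x ∈ Wside G b a := fun x hx =>
    (side_dichot hmed hab x).elim
      (fun hw => absurd (hH' x hx b hbH')
        fun hr => no_cross_reach hmed hab hw (self_mem_wside hab.symm) hr)
      id
  constructor <;> ext x <;> constructor
  · exact hsub x
  · intro hx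
    rcases (hcov ▸ Set.mem_univ x : x ∈ H ∪ H') with hh | hh
    · exact hh
    · exact absurd (hsub' x hh) fun hw => not_both_sides hx hw
  · exact hsub' x
  · intro hx
    rcases (hcov ▸ Set.mem_univ x : x ∈ H ∪ H') with hh | hh
    · exact absurd (hsub x hh) fun hw => not_both_sides hw hx
    · exact hh

lemma halfspace_id (hmed : MedianGraph G) (hab : G.Adj a b) {H H' : Set V}
    (h : IsHalfspacePair G (crossSet G a b) H H') :
    (H = Wside G a b ∧ H' = Wside G b a) ∨ (H = Wside G b a ∧ H' = Wside G a b) := by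
  have hcov := h.2.2.2.1
  rcases (hcov ▸ Set.mem_univ a : a ∈ H ∪ H') with ha | ha
  · exact Or.inl (halfspace_id_aux hmed hab h ha)
  · have := halfspace_id_aux hmed hab (halfspacepair_symm h) ha
    exact Or.inr ⟨this.2, this.1⟩

lemma sym2_exists (e : Sym2 V) : ∃ x y : V, e = s(x, y) :=
  Sym2.ind (fun x y => ⟨x, y, rfl⟩) e

lemma rtg_symm {e f : Sym2 V} (h : Relation.ReflTransGen (Theta0 G) e f) :
    Relation.ReflTransGen (Theta0 G) f e := by
  induction h with
  | refl => exact Relation.ReflTransGen.refl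
  | tail h1 h2 ih => exact Relation.ReflTransGen.head (theta0_symm h2) ih

lemma no_self_ortho_aux (hmed : MedianGraph G) (hab : G.Adj a b) {u v x y : V}
    (hsq : IsSquare G u v x y) (hu : u ∈ Wside G a b)
    (huv : s(u, v) ∈ crossSet G a b) (hxy : s(x, y) ∈ crossSet G a b)
    (hux : s(u, x) ∈ crossSet G a b) (hvy : s(v, y) ∈ crossSet G a b) : False := by
  obtain ⟨auv, axy, auxx, avy, huy, hvx⟩ := hsq
  have hc := hmed.1
  have hv : v ∈ Wside G b a := by
    rcases cross_elim huv with ⟨-, h⟩ | ⟨-, h⟩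
    · exact h
    · exact (not_both_sides hu h).elim
  have hx : x ∈ Wside G b a := by
    rcases cross_elim hux with ⟨-, h⟩ | ⟨-, h⟩
    · exact h
    · exact (not_both_sides hu h).elim
  have hy : y ∈ Wside G a b := by
    rcases cross_elim hxy with ⟨h, -⟩ | ⟨h, -⟩
    · exact (not_both_sides h hx).elim
    · exact h
  have hub := (wside_iff hmed hab).mp hu
  have hyb := (wside_iff hmed hab).mp hy
  have hcr1 := cross_dists hmed hab auv hu hv
  have hcr2 := cross_dists hmed hab auxx hu hx
  have hcr3 := cross_dists hmed hab avy.symm hy hv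
  have duy2 : G.dist u y = 2 := by
    apply dist_two hc auv.symm avy huy
    intro hadj; rcases adj_cases hmed hadj a with h | h <;> omega
  have e1 : G.dist u v = 1 := dist_of_adj auv
  have e2 : G.dist v y = 1 := dist_of_adj avy
  have e3 : G.dist y v = 1 := by rw [dc]; exact e2
  have e4 : G.dist v u = 1 := by rw [dc]; exact e1
  have e5 : G.dist u x = 1 := dist_of_adj auxx
  have e6 : G.dist x y = 1 := dist_of_adj axy
  have e7 : G.dist y x = 1 := by rw [dc]; exact e6
  have e8 : G.dist x u = 1 := by rw [dc]; exact e5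
  have c1 : G.dist b v = G.dist v b := dc G b v
  have c2 : G.dist b u = G.dist u b := dc G b u
  have c3 : G.dist b x = G.dist x b := dc G b x
  have : v = x := by
    refine med_eq hmed (x := u) (y := y) (z := b) ⟨?_, ?_, ?_⟩ ⟨?_, ?_, ?_⟩ <;>
      simp only [mem_interval] <;> omega
  exact hvx this

lemma forward_core (hmed : MedianGraph G) (hab : G.Adj a b) {c d₀ : V} (hcd : G.Adj c d₀)
    (hdisj : ∀ e, e ∈ crossSet G a b → e ∈ crossSet G c d₀ → False)
    {u v x y : V} (hsq : IsSquare G u v x y)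
    (huv : s(u, v) ∈ crossSet G a b) (hxy : s(x, y) ∈ crossSet G a b)
    (hux : s(u, x) ∈ crossSet G c d₀) (hvy : s(v, y) ∈ crossSet G c d₀)
    (hu1 : u ∈ Wside G a b) (hu2 : u ∈ Wside G c d₀) :
    ∀ S T : Set V, (S = Wside G a b ∨ S = Wside G b a) →
      (T = Wside G c d₀ ∨ T = Wside G d₀ c) →
      (boundarySet G (crossSet G a b) S ∩ boundarySet G (crossSet G c d₀) T).Nonempty := by
  obtain ⟨auv, axy, auxx, avy, huy, hvx⟩ := hsq
  have hv1 : v ∈ Wside G b a := by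
    rcases cross_elim huv with ⟨-, h⟩ | ⟨-, h⟩
    · exact h
    · exact (not_both_sides hu1 h).elim
  have hx2 : x ∈ Wside G d₀ c := by
    rcases cross_elim hux with ⟨-, h⟩ | ⟨-, h⟩
    · exact h
    · exact (not_both_sides hu2 h).elim
  have hx1 : x ∈ Wside G a b := by
    rcases side_dichot hmed hab x with h | h
    · exact h
    · exact ((hdisj _ (mem_crossSet auxx hu1 h) hux)).elim
  have hv2 : v ∈ Wside G c d₀ := by
    rcases side_dichot hmed hcd v with h | h
    · exact h
    · exact ((hdisj _ huv (mem_crossSet auv hu2 h))).elim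
  have hy1 : y ∈ Wside G b a := by
    rcases cross_elim hxy with ⟨-, h⟩ | ⟨-, h⟩
    · exact h
    · exact (not_both_sides hx1 h).elim
  have hy2 : y ∈ Wside G d₀ c := by
    rcases cross_elim hvy with ⟨-, h⟩ | ⟨-, h⟩
    · exact h
    · exact (not_both_sides hv2 h).elim
  rintro S T (rfl | rfl) (rfl | rfl)
  · exact ⟨u, ⟨hu1, v, auv, huv⟩, ⟨hu2, x, auxx, hux⟩⟩
  · exact ⟨x, ⟨hx1, y, axy, hxy⟩, ⟨hx2, u, auxx.symm, by rw [Sym2.eq_swap]; exact hux⟩⟩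
  · exact ⟨v, ⟨hv1, u, auv.symm, by rw [Sym2.eq_swap]; exact huv⟩, ⟨hv2, y, avy, hvy⟩⟩
  · exact ⟨y, ⟨hy1, x, axy.symm, by rw [Sym2.eq_swap]; exact hxy⟩,
      ⟨hy2, v, avy.symm, by rw [Sym2.eq_swap]; exact hvy⟩⟩

lemma forward_mid (hmed : MedianGraph G) (hab : G.Adj a b) {c d₀ : V} (hcd : G.Adj c d₀)
    (hdisj : ∀ e, e ∈ crossSet G a b → e ∈ crossSet G c d₀ → False)
    {u v x y : V} (hsq : IsSquare G u v x y)
    (huv : s(u, v) ∈ crossSet G a b) (hxy : s(x, y) ∈ crossSet G a b)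
    (hux : s(u, x) ∈ crossSet G c d₀) (hvy : s(v, y) ∈ crossSet G c d₀)
    (hu1 : u ∈ Wside G a b) :
    ∀ S T : Set V, (S = Wside G a b ∨ S = Wside G b a) →
      (T = Wside G c d₀ ∨ T = Wside G d₀ c) →
      (boundarySet G (crossSet G a b) S ∩ boundarySet G (crossSet G c d₀) T).Nonempty := by
  rcases side_dichot hmed hcd u with hu2 | hu2
  · exact forward_core hmed hab hcd hdisj ⟨hsq.1, hsq.2.1, hsq.2.2.1, hsq.2.2.2.1,
      hsq.2.2.2.2.1, hsq.2.2.2.2.2⟩ huv hxy hux hvy hu1 hu2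
  · have hdisj' : ∀ e, e ∈ crossSet G a b → e ∈ crossSet G d₀ c → False := by
      intro e h1 h2
      exact hdisj e h1 (by rw [crossSet_comm]; exact h2)
    have hux' : s(u, x) ∈ crossSet G d₀ c := by rw [← crossSet_comm]; exact hux
    have hvy' : s(v, y) ∈ crossSet G d₀ c := by rw [← crossSet_comm]; exact hvy
    have hcore := forward_core hmed hab hcd.symm hdisj' hsq huv hxy hux' hvy' hu1 hu2
    intro S T hS hT
    have := hcore S T hS hT.symm
    rwa [show crossSet G d₀ c = crossSet G c d₀ from crossSet_comm] at this

lemma forward_all (hmed : MedianGraph G) (hab : G.Adj a b) {c d₀ : V} (hcd : G.Adj c d₀)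
    (hdisj : ∀ e, e ∈ crossSet G a b → e ∈ crossSet G c d₀ → False)
    {u v x y : V} (hsq : IsSquare G u v x y)
    (huv : s(u, v) ∈ crossSet G a b) (hxy : s(x, y) ∈ crossSet G a b)
    (hux : s(u, x) ∈ crossSet G c d₀) (hvy : s(v, y) ∈ crossSet G c d₀) :
    ∀ S T : Set V, (S = Wside G a b ∨ S = Wside G b a) →
      (T = Wside G c d₀ ∨ T = Wside G d₀ c) →
      (boundarySet G (crossSet G a b) S ∩ boundarySet G (crossSet G c d₀) T).Nonempty := by
  rcases side_dichot hmed hab u with hu1 | hu1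
  · exact forward_mid hmed hab hcd hdisj hsq huv hxy hux hvy hu1
  · have hdisj' : ∀ e, e ∈ crossSet G b a → e ∈ crossSet G c d₀ → False := by
      intro e h1 h2
      exact hdisj e (by rw [crossSet_comm]; exact h1) h2
    have huv' : s(u, v) ∈ crossSet G b a := by rw [← crossSet_comm]; exact huv
    have hxy' : s(x, y) ∈ crossSet G b a := by rw [← crossSet_comm]; exact hxy
    have hmid := forward_mid hmed hab.symm hcd hdisj' hsq huv' hxy' hux hvy hu1
    intro S T hS hT
    have := hmid S T hS.symm hT
    rwa [show crossSet G b a = crossSet G a b from crossSet_comm] at this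

lemma backward_aux (hmed : MedianGraph G) (hab : G.Adj a b) {c d₀ : V} (hcd : G.Adj c d₀)
    (hdisj : ∀ e, e ∈ crossSet G a b → e ∈ crossSet G c d₀ → False)
    {p z : V} (hp1 : p ∈ Wside G a b) (hp2 : p ∈ Wside G c d₀)
    (hz1 : z ∈ Wside G b a) (hz2 : z ∈ Wside G d₀ c)
    (hpe1 : ∃ q, G.Adj p q ∧ s(p, q) ∈ crossSet G a b)
    (hpe2 : ∃ q, G.Adj p q ∧ s(p, q) ∈ crossSet G c d₀) :
    Orthogonal G (crossSet G a b) (crossSet G c d₀) := by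
  have hc := hmed.1
  obtain ⟨p₁, ha1, he1⟩ := hpe1
  obtain ⟨p₂, ha2, he2⟩ := hpe2
  have hp₁ : p₁ ∈ Wside G b a := by
    rcases cross_elim he1 with ⟨-, h⟩ | ⟨-, h⟩
    · exact h
    · exact (not_both_sides hp1 h).elim
  have hp₂ : p₂ ∈ Wside G d₀ c := by
    rcases cross_elim he2 with ⟨-, h⟩ | ⟨-, h⟩
    · exact h
    · exact (not_both_sides hp2 h).elim
  have hp₁2 : p₁ ∈ Wside G c d₀ := by
    rcases side_dichot hmed hcd p₁ with h | h
    · exact h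
    · exact (hdisj _ he1 (mem_crossSet ha1 hp2 h)).elim
  have hp₂1 : p₂ ∈ Wside G a b := by
    rcases side_dichot hmed hab p₂ with h | h
    · exact h
    · exact (hdisj _ (mem_crossSet ha2 hp1 h) he2).elim
  have h12 : G.dist p₁ p₂ = 2 := by
    apply dist_two hc ha1 ha2
    · intro he; exact not_both_sides hp₂1 (he ▸ hp₁)
    · intro hadj
      exact dist_ne_of_adj hmed hadj p (by rw [dist_of_adj ha1, dist_of_adj ha2])
  obtain ⟨m, h1, h2, h3⟩ := med_exists hmed p₁ p₂ z
  rw [mem_interval] at h1 h2 h3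
  have hm1 : m ∈ Wside G b a := wside_convex hmed hab.symm hz1 hp₁ h3
  have hm2 : m ∈ Wside G d₀ c := wside_convex hmed hcd.symm hp₂ hz2 h2
  have hmp₁ : m ≠ p₁ := fun he => not_both_sides hp₁2 (he ▸ hm2)
  have hmp₂ : m ≠ p₂ := fun he => not_both_sides hp₂1 (he ▸ hm1)
  rw [h12] at h1
  have n1 : G.dist p₁ m ≠ 0 := fun h => hmp₁ (dist_eq_zero hc h).symm
  have n2 : G.dist m p₂ ≠ 0 := fun h => hmp₂ (dist_eq_zero hc h)
  have am1 : G.Adj p₁ m := adj_of_dist_eq_one (by omega)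
  have am2 : G.Adj p₂ m := adj_of_dist_eq_one (by rw [dc]; omega)
  refine ⟨p, p₁, p₂, m, ⟨ha1, am2, ha2, am1, ?_, ?_⟩, he1, ?_, he2, ?_⟩
  · exact fun he => not_both_sides (he ▸ hp1) hm1
  · exact fun he => not_both_sides hp₂1 (he ▸ hp₁)
  · exact mem_crossSet am2 hp₂1 hm1
  · exact mem_crossSet am1 hp₁2 hm2

end Aux

/-- In a median graph, two Θ-classes are orthogonal iff the four
pairwise intersections of the boundaries of their halfspaces are nonempty. -/
theorem orthogonal_iff_boundaries_meet {V : Type*} [Fintype V] (G : SimpleGraph V)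
    (hmed : MedianGraph G) (C₁ C₂ : Set (Sym2 V))
    (h₁ : ThetaClass G C₁) (h₂ : ThetaClass G C₂)
    (H₁ H₁' H₂ H₂' : Set V)
    (hH₁ : IsHalfspacePair G C₁ H₁ H₁') (hH₂ : IsHalfspacePair G C₂ H₂ H₂') :
    Orthogonal G C₁ C₂ ↔
      ((boundarySet G C₁ H₁ ∩ boundarySet G C₂ H₂).Nonempty ∧
       (boundarySet G C₁ H₁' ∩ boundarySet G C₂ H₂).Nonempty ∧
       (boundarySet G C₁ H₁ ∩ boundarySet G C₂ H₂').Nonempty ∧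
       (boundarySet G C₁ H₁' ∩ boundarySet G C₂ H₂').Nonempty) := by
  obtain ⟨e₁, he₁, hC₁⟩ := h₁
  obtain ⟨e₂, he₂, hC₂⟩ := h₂
  obtain ⟨a, b, rfl⟩ := sym2_exists e₁
  obtain ⟨c, d₀, rfl⟩ := sym2_exists e₂
  have hab : G.Adj a b := (G.mem_edgeSet).mp he₁
  have hcd : G.Adj c d₀ := (G.mem_edgeSet).mp he₂
  have hC₁' : C₁ = crossSet G a b := hC₁.trans (theta_class_eq hmed hab)
  have hC₂' : C₂ = crossSet G c d₀ := hC₂.trans (theta_class_eq hmed hcd)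
  subst hC₁'
  subst hC₂'
  by_cases hCC : crossSet G a b = crossSet G c d₀
  · constructor
    · rintro ⟨u, v, x, y, hsq, huv, hxy, hux, hvy⟩
      exfalso
      rw [← hCC] at hux hvy
      rcases side_dichot hmed hab u with hu | hu
      · exact no_self_ortho_aux hmed hab hsq hu huv hxy hux hvy
      · rw [show crossSet G a b = crossSet G b a from crossSet_comm] at huv hxy hux hvy
        exact no_self_ortho_aux hmed hab.symm hsq hu huv hxy hux hvy
    · rintro ⟨hne1, hne2, hne3, hne4⟩
      exfalso
      rw [← hCC] at hH₂
      rcases halfspace_id hmed hab hH₁ with ⟨g1, g1'⟩ | ⟨g1, g1'⟩ <;>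
        rcases halfspace_id hmed hab hH₂ with ⟨g2, g2'⟩ | ⟨g2, g2'⟩
      · obtain ⟨w, hwa, hwb⟩ := hne2
        exact not_both_sides (g2 ▸ hwb.1) (g1' ▸ hwa.1)
      · obtain ⟨w, hwa, hwb⟩ := hne1
        exact not_both_sides (g1 ▸ hwa.1) (g2 ▸ hwb.1)
      · obtain ⟨w, hwa, hwb⟩ := hne1
        exact not_both_sides (g2 ▸ hwb.1) (g1 ▸ hwa.1)
      · obtain ⟨w, hwa, hwb⟩ := hne2
        exact not_both_sides (g1' ▸ hwa.1) (g2 ▸ hwb.1)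
  · have hdisj : ∀ e, e ∈ crossSet G a b → e ∈ crossSet G c d₀ → False := by
      intro e hea hec
      apply hCC
      rw [← theta_class_eq hmed hab] at hea
      rw [← theta_class_eq hmed hcd] at hec
      simp only [Set.mem_setOf_eq] at hea hec
      rw [← theta_class_eq hmed hab, ← theta_class_eq hmed hcd]
      ext g
      simp only [Set.mem_setOf_eq]
      constructor <;> intro hg
      · exact ⟨hec.1, hg.2.1, (hec.2.2.trans (rtg_symm hea.2.2)).trans hg.2.2⟩
      · exact ⟨hea.1, hg.2.1, (hea.2.2.trans (rtg_symm hec.2.2)).trans hg.2.2⟩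
    constructor
    · rintro ⟨u, v, x, y, hsq, huv, hxy, hux, hvy⟩
      have hall := forward_all hmed hab hcd hdisj hsq huv hxy hux hvy
      have hid1 := halfspace_id hmed hab hH₁
      have hid2 := halfspace_id hmed hcd hH₂
      have m1 : H₁ = Wside G a b ∨ H₁ = Wside G b a := hid1.imp And.left And.left
      have m1' : H₁' = Wside G a b ∨ H₁' = Wside G b a :=
        hid1.elim (fun h => Or.inr h.2) (fun h => Or.inl h.2)
      have m2 : H₂ = Wside G c d₀ ∨ H₂ = Wside G d₀ c := hid2.imp And.left And.left
      have m2' : H₂' = Wside G c d₀ ∨ H₂' = Wside G d₀ c :=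
        hid2.elim (fun h => Or.inr h.2) (fun h => Or.inl h.2)
      exact ⟨hall H₁ H₂ m1 m2, hall H₁' H₂ m1' m2, hall H₁ H₂' m1 m2',
        hall H₁' H₂' m1' m2'⟩
    · rintro ⟨hne1, -, -, hne4⟩
      obtain ⟨p, hp1, hp2⟩ := hne1
      obtain ⟨z, hz1, hz2⟩ := hne4
      rcases halfspace_id hmed hab hH₁ with ⟨g1, g1'⟩ | ⟨g1, g1'⟩ <;>
        rcases halfspace_id hmed hcd hH₂ with ⟨g2, g2'⟩ | ⟨g2, g2'⟩
      · exact backward_aux hmed hab hcd hdisj (g1 ▸ hp1.1) (g2 ▸ hp2.1)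
          (g1' ▸ hz1.1) (g2' ▸ hz2.1) hp1.2 hp2.2
      · have hdisj' : ∀ e, e ∈ crossSet G a b → e ∈ crossSet G d₀ c → False :=
          fun e h1 h2 => hdisj e h1 (by rw [crossSet_comm]; exact h2)
        have hpe2 : ∃ q, G.Adj p q ∧ s(p, q) ∈ crossSet G d₀ c := by
          rw [show crossSet G d₀ c = crossSet G c d₀ from crossSet_comm]
          exact hp2.2
        have hO := backward_aux hmed hab hcd.symm hdisj' (g1 ▸ hp1.1) (g2 ▸ hp2.1)
          (g1' ▸ hz1.1) (g2' ▸ hz2.1) hp1.2 hpe2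
        rwa [show crossSet G d₀ c = crossSet G c d₀ from crossSet_comm] at hO
      · have hdisj' : ∀ e, e ∈ crossSet G b a → e ∈ crossSet G c d₀ → False :=
          fun e h1 h2 => hdisj e (by rw [crossSet_comm]; exact h1) h2
        have hpe1 : ∃ q, G.Adj p q ∧ s(p, q) ∈ crossSet G b a := by
          rw [show crossSet G b a = crossSet G a b from crossSet_comm]
          exact hp1.2
        have hO := backward_aux hmed hab.symm hcd hdisj' (g1 ▸ hp1.1) (g2 ▸ hp2.1)
          (g1' ▸ hz1.1) (g2' ▸ hz2.1) hpe1 hp2.2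
        rwa [show crossSet G b a = crossSet G a b from crossSet_comm] at hO
      · have hdisj' : ∀ e, e ∈ crossSet G b a → e ∈ crossSet G d₀ c → False :=
          fun e h1 h2 => hdisj e (by rw [crossSet_comm]; exact h1)
            (by rw [crossSet_comm]; exact h2)
        have hpe1 : ∃ q, G.Adj p q ∧ s(p, q) ∈ crossSet G b a := by
          rw [show crossSet G b a = crossSet G a b from crossSet_comm]
          exact hp1.2
        have hpe2 : ∃ q, G.Adj p q ∧ s(p, q) ∈ crossSet G d₀ c := by
          rw [show crossSet G d₀ c = crossSet G c d₀ from crossSet_comm]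
          exact hp2.2
        have hO := backward_aux hmed hab.symm hcd.symm hdisj' (g1 ▸ hp1.1) (g2 ▸ hp2.1)
          (g1' ▸ hz1.1) (g2' ▸ hz2.1) hpe1 hpe2
        rwa [show crossSet G b a = crossSet G a b from crossSet_comm,
          show crossSet G d₀ c = crossSet G c d₀ from crossSet_comm] at hO

end MedianPaper
end

section
/- In a median graph, let xu be an edge of Θ-class E_i and uy an edge of Θ-class E_j, sharing the endpoint u. If E_i and E_j are orthogonal, then there exists a vertex v adjacent to both x and y such that uyvx is a 4-cycle. -/
namespace MedianPaper

variable {V : Type*}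

section Aux

variable {V : Type*} {G : SimpleGraph V}

private lemma sym2_cases (e : Sym2 V) : ∃ a b, e = s(a, b) :=
  Sym2.ind (fun a b => ⟨a, b, rfl⟩) e

private lemma dist_adj (hc : G.Connected) {a b : V} (h : G.Adj a b) : G.dist a b = 1 :=
  SimpleGraph.dist_eq_one_iff_adj.mpr h

private lemma dist_zero (hc : G.Connected) {a b : V} (h : G.dist a b = 0) : a = b :=
  hc.dist_eq_zero_iff.mp h

/-- Adjacent vertices have distances to any `w` differing by exactly one. -/
private lemma grad (hmed : MedianGraph G) {a b : V} (hab : G.Adj a b) (w : V) :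
    G.dist w b = G.dist w a + 1 ∨ G.dist w a = G.dist w b + 1 := by
  have hc := hmed.1
  obtain ⟨m, ⟨h1, h2, h3⟩, -⟩ := hmed.2 a b w
  simp only [interval, Set.mem_setOf_eq] at h1 h2 h3
  rw [dist_adj hc hab] at h1
  have hcm : G.dist a m = 0 ∨ G.dist m b = 0 := by omega
  have e1 : G.dist b w = G.dist w b := SimpleGraph.dist_comm
  have e2 : G.dist a w = G.dist w a := SimpleGraph.dist_comm
  have e4 : G.dist m a = G.dist a m := SimpleGraph.dist_comm
  have dba : G.dist b a = 1 := dist_adj hc hab.symm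
  rcases hcm with h | h
  · have hma : a = m := dist_zero hc h
    rw [← hma] at h2
    left; omega
  · have hmb : m = b := dist_zero hc h
    rw [hmb] at h3
    right; omega

private lemma tri_free (hmed : MedianGraph G) {a b c : V} (hab : G.Adj a b)
    (hbc : G.Adj b c) (hac : G.Adj a c) : False := by
  have hc := hmed.1
  obtain ⟨m, ⟨h1, h2, h3⟩, -⟩ := hmed.2 a b c
  simp only [interval, Set.mem_setOf_eq] at h1 h2 h3
  rw [dist_adj hc hab] at h1
  rw [dist_adj hc hbc] at h2
  rw [dist_adj hc hac.symm] at h3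
  have hcm : G.dist a m = 0 ∨ G.dist m b = 0 := by omega
  have e1 : G.dist b a = 1 := dist_adj hc hab.symm
  have e2 : G.dist a c = 1 := dist_adj hc hac
  have e3 : G.dist c b = 1 := dist_adj hc hbc.symm
  rcases hcm with h | h
  · have hma : a = m := dist_zero hc h
    rw [← hma] at h2
    omega
  · have hmb : m = b := dist_zero hc h
    rw [hmb] at h3
    omega

private lemma dist_two_s4 (hmed : MedianGraph G) {a b c : V} (hab : G.Adj a b)
    (hbc : G.Adj b c) (hac : a ≠ c) : G.dist a c = 2 := by
  have hc := hmed.1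
  have hle : G.dist a c ≤ 2 := by
    have ht := hc.dist_triangle (u := a) (v := b) (w := c)
    rw [dist_adj hc hab, dist_adj hc hbc] at ht
    omega
  have h0 : G.dist a c ≠ 0 := fun h => hac (dist_zero hc h)
  have h1 : G.dist a c ≠ 1 := fun h =>
    tri_free hmed hab hbc (SimpleGraph.dist_eq_one_iff_adj.mp h)
  omega

private lemma common_nbr (hmed : MedianGraph G) {a c w : V} (h2 : G.dist a c = 2)
    (heq : G.dist w a = G.dist w c) :
    ∃ m, G.Adj a m ∧ G.Adj c m ∧ G.dist w m + 1 = G.dist w a := by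
  have hc := hmed.1
  obtain ⟨m, ⟨i1, i2, i3⟩, -⟩ := hmed.2 a c w
  simp only [interval, Set.mem_setOf_eq] at i1 i2 i3
  rw [h2] at i1
  have e1 : G.dist c w = G.dist w c := SimpleGraph.dist_comm
  have e2 : G.dist a w = G.dist w a := SimpleGraph.dist_comm
  have e3 : G.dist c a = 2 := by rw [SimpleGraph.dist_comm]; exact h2
  have hma : m ≠ a := by
    intro h
    rw [h] at i2
    omega
  have hmc : m ≠ c := by
    intro h
    rw [h] at i3
    omega
  have d1 : G.dist a m = 1 ∧ G.dist m c = 1 := by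
    have f1 : G.dist a m ≠ 0 := fun h => hma ((dist_zero hc h).symm)
    have f2 : G.dist m c ≠ 0 := fun h => hmc (dist_zero hc h)
    omega
  have hma' : G.dist m a = 1 := by rw [SimpleGraph.dist_comm]; exact d1.1
  refine ⟨m, SimpleGraph.dist_eq_one_iff_adj.mp d1.1,
    SimpleGraph.dist_eq_one_iff_adj.mp (by rw [SimpleGraph.dist_comm]; exact d1.2), by omega⟩

private lemma square_rev {u v x y : V} (hs : IsSquare G u v x y) : IsSquare G x y u v :=
  ⟨hs.2.1, hs.1, hs.2.2.1.symm, hs.2.2.2.1.symm,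
    fun h => hs.2.2.2.2.2 h.symm, fun h => hs.2.2.2.2.1 h.symm⟩

private lemma square_swap {u v x y : V} (hs : IsSquare G u v x y) : IsSquare G v u y x :=
  ⟨hs.1.symm, hs.2.1.symm, hs.2.2.2.1, hs.2.2.1, hs.2.2.2.2.2, hs.2.2.2.2.1⟩

private lemma square_fwd (hmed : MedianGraph G) {u v x y : V} (hs : IsSquare G u v x y)
    (w : V) (h : G.dist w u < G.dist w v) : G.dist w x < G.dist w y := by
  obtain ⟨huv, hxy, hux, hvy, huy, hvx⟩ := hs
  have hc := hmed.1
  have g1 := grad hmed huv w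
  have g2 := grad hmed hxy w
  have g3 := grad hmed hux w
  have g4 := grad hmed hvy w
  by_contra hcon
  push_neg at hcon
  have hv1 : G.dist w v = G.dist w u + 1 := by rcases g1 with h' | h' <;> omega
  have hkey : G.dist w x = G.dist w u + 1 ∧ G.dist w y = G.dist w u := by
    rcases g2 with h2 | h2 <;> rcases g3 with h3 | h3 <;> rcases g4 with h4 | h4 <;> omega
  have hd_uy : G.dist u y = 2 := dist_two_s4 hmed huv hvy huy
  have heqw : G.dist w u = G.dist w y := hkey.2.symm
  obtain ⟨m, hum, hym, hm⟩ := common_nbr hmed hd_uy heqw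
  have hmv : m ≠ v := by rintro rfl; omega
  have hmx : m ≠ x := by rintro rfl; omega
  have d_vx : G.dist v x = 2 := dist_two_s4 hmed huv.symm hux hvx
  have d_vm : G.dist v m = 2 := dist_two_s4 hmed huv.symm hum (fun h => hmv h.symm)
  have d_xm : G.dist x m = 2 := dist_two_s4 hmed hux.symm hum (fun h => hmx h.symm)
  have a_vu : G.dist v u = 1 := dist_adj hc huv.symm
  have a_ux : G.dist u x = 1 := dist_adj hc hux
  have a_xu : G.dist x u = 1 := dist_adj hc hux.symm
  have a_um : G.dist u m = 1 := dist_adj hc hum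
  have a_mu : G.dist m u = 1 := dist_adj hc hum.symm
  have a_uv : G.dist u v = 1 := dist_adj hc huv
  have a_vy : G.dist v y = 1 := dist_adj hc hvy
  have a_yx : G.dist y x = 1 := dist_adj hc hxy.symm
  have a_xy : G.dist x y = 1 := dist_adj hc hxy
  have a_ym : G.dist y m = 1 := dist_adj hc hym
  have a_my : G.dist m y = 1 := dist_adj hc hym.symm
  have a_yv : G.dist y v = 1 := dist_adj hc hvy.symm
  have d_mv : G.dist m v = 2 := by rw [SimpleGraph.dist_comm]; exact d_vm
  have hu_med : u ∈ interval G v x ∧ u ∈ interval G x m ∧ u ∈ interval G m v := by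
    refine ⟨?_, ?_, ?_⟩ <;> simp only [interval, Set.mem_setOf_eq] <;> omega
  have hy_med : y ∈ interval G v x ∧ y ∈ interval G x m ∧ y ∈ interval G m v := by
    refine ⟨?_, ?_, ?_⟩ <;> simp only [interval, Set.mem_setOf_eq] <;> omega
  exact huy ((hmed.2 v x m).unique hu_med hy_med)

private lemma square_iff (hmed : MedianGraph G) {u v x y : V} (hs : IsSquare G u v x y)
    (w : V) : (G.dist w u < G.dist w v ↔ G.dist w x < G.dist w y) :=
  ⟨square_fwd hmed hs w, square_fwd hmed (square_rev hs) w⟩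

private lemma chain_parallel (hmed : MedianGraph G) {a b : V} (hab : G.Adj a b)
    {f : Sym2 V} (h : Relation.ReflTransGen (Theta0 G) s(a, b) f) :
    ∃ c d, f = s(c, d) ∧ G.Adj c d ∧
      ∀ w, (G.dist w a < G.dist w b ↔ G.dist w c < G.dist w d) := by
  induction h with
  | refl => exact ⟨a, b, rfl, hab, fun w => Iff.rfl⟩
  | tail h1 h2 ih =>
    obtain ⟨c, d, rfl, hcd, hpar⟩ := ih
    obtain ⟨p, q, r, s, hsq, he, hf⟩ := h2
    rcases Sym2.eq_iff.mp he with ⟨rfl, rfl⟩ | ⟨rfl, rfl⟩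
    · exact ⟨r, s, hf, hsq.2.1, fun w => (hpar w).trans (square_iff hmed hsq w)⟩
    · exact ⟨s, r, hf.trans Sym2.eq_swap, hsq.2.1.symm,
        fun w => (hpar w).trans (square_iff hmed (square_swap hsq) w)⟩

private lemma chain_pair (hmed : MedianGraph G) {a b x u c d : V} (hab : G.Adj a b)
    (hxu : G.Adj x u) (hcd : G.Adj c d)
    (h1 : Relation.ReflTransGen (Theta0 G) s(a, b) s(x, u))
    (h2 : Relation.ReflTransGen (Theta0 G) s(a, b) s(c, d)) :
    (∀ w, G.dist w x < G.dist w u ↔ G.dist w c < G.dist w d) ∨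
    (∀ w, G.dist w x < G.dist w u ↔ G.dist w d < G.dist w c) := by
  obtain ⟨c₁, d₁, he₁, -, hp₁⟩ := chain_parallel hmed hab h1
  obtain ⟨c₂, d₂, he₂, -, hp₂⟩ := chain_parallel hmed hab h2
  rcases Sym2.eq_iff.mp he₁ with ⟨rfl, rfl⟩ | ⟨rfl, rfl⟩ <;>
    rcases Sym2.eq_iff.mp he₂ with ⟨rfl, rfl⟩ | ⟨rfl, rfl⟩ <;>
    [left; right; right; left] <;>
    · intro w
      have a1 := hp₁ w
      have a2 := hp₂ w
      have g1 := grad hmed hxu w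
      have g2 := grad hmed hcd w
      omega

end Aux

/-- In a median graph, if `xu ∈ E_i` and `uy ∈ E_j` are incident
edges of two orthogonal Θ-classes, then there is a vertex `v` adjacent to both
`x` and `y` such that `uyvx` is a 4-cycle. -/
theorem square_of_incident_orthogonal_edges {V : Type*} [Fintype V]
    (G : SimpleGraph V) (hmed : MedianGraph G)
    (Ci Cj : Set (Sym2 V)) (hCi : ThetaClass G Ci) (hCj : ThetaClass G Cj)
    (x u y : V) (hxu : G.Adj x u) (hxuC : s(x, u) ∈ Ci)
    (huy : G.Adj u y) (huyC : s(u, y) ∈ Cj)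
    (horth : Orthogonal G Ci Cj) :
    ∃ v : V, IsSquare G u y x v := by
  have hc := hmed.1
  obtain ⟨ei, heiE, rfl⟩ := hCi
  obtain ⟨ej, hejE, rfl⟩ := hCj
  obtain ⟨a, b, rfl⟩ := sym2_cases ei
  obtain ⟨a', b', rfl⟩ := sym2_cases ej
  have hab : G.Adj a b := (SimpleGraph.mem_edgeSet G).mp heiE
  have hab' : G.Adj a' b' := (SimpleGraph.mem_edgeSet G).mp hejE
  obtain ⟨p, q, r, t, hsq, hE1, hE2, hE3, hE4⟩ := horth
  obtain ⟨hpq, hrt, hpr, hqt, hpt, hqr⟩ := hsq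
  -- chains
  have chain_xu : Relation.ReflTransGen (Theta0 G) s(a, b) s(x, u) := hxuC.2.2
  have chain_pq : Relation.ReflTransGen (Theta0 G) s(a, b) s(p, q) := hE1.2.2
  have chain_yu : Relation.ReflTransGen (Theta0 G) s(a', b') s(y, u) := by
    have h := huyC.2.2
    rwa [Sym2.eq_swap (a := u)] at h
  have chain_pr : Relation.ReflTransGen (Theta0 G) s(a', b') s(p, r) := hE3.2.2
  have hU := chain_pair hmed hab hxu hpq chain_xu chain_pq
  have hB := chain_pair hmed hab' huy.symm hpr chain_yu chain_pr
  -- distances among square corners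
  have d_pp : G.dist p p = 0 := SimpleGraph.dist_self
  have d_qq : G.dist q q = 0 := SimpleGraph.dist_self
  have d_rr : G.dist r r = 0 := SimpleGraph.dist_self
  have d_pq : G.dist p q = 1 := dist_adj hc hpq
  have d_qp : G.dist q p = 1 := dist_adj hc hpq.symm
  have d_pr : G.dist p r = 1 := dist_adj hc hpr
  have d_rp : G.dist r p = 1 := dist_adj hc hpr.symm
  have d_tq : G.dist t q = 1 := dist_adj hc hqt.symm
  have d_tr : G.dist t r = 1 := dist_adj hc hrt.symm
  have d_rq : G.dist r q = 2 := dist_two_s4 hmed hpr.symm hpq (fun h => hqr h.symm)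
  have d_qr : G.dist q r = 2 := dist_two_s4 hmed hpq.symm hpr hqr
  have d_tp : G.dist t p = 2 := dist_two_s4 hmed hqt.symm hpq.symm (fun h => hpt h.symm)
  -- corner values of the two halfspace indicators
  have hAfacts : ((G.dist r x < G.dist r u) ↔ (G.dist p x < G.dist p u)) ∧
      ((G.dist q x < G.dist q u) ↔ ¬(G.dist p x < G.dist p u)) ∧
      ((G.dist t x < G.dist t u) ↔ ¬(G.dist p x < G.dist p u)) := by
    rcases hU with hA | hA <;>
    · have h1 := hA p
      have h2 := hA q
      have h3 := hA r
      have h4 := hA t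
      omega
  have hBfacts : ((G.dist q y < G.dist q u) ↔ (G.dist p y < G.dist p u)) ∧
      ((G.dist r y < G.dist r u) ↔ ¬(G.dist p y < G.dist p u)) ∧
      ((G.dist t y < G.dist t u) ↔ ¬(G.dist p y < G.dist p u)) := by
    rcases hB with hA | hA <;>
    · have h1 := hA p
      have h2 := hA q
      have h3 := hA r
      have h4 := hA t
      omega
  -- the two classes have distinct halfspace partitions, hence x ≠ y
  have hxy_ne : x ≠ y := by
    rintro rfl
    have h1 := hAfacts.2.1
    have h2 := hBfacts.1
    tauto
  -- a corner on the far side of both classes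
  have hw : ∃ w, (G.dist w x < G.dist w u) ∧ (G.dist w y < G.dist w u) := by
    by_cases hp1 : G.dist p x < G.dist p u <;> by_cases hp2 : G.dist p y < G.dist p u
    · exact ⟨p, hp1, hp2⟩
    · exact ⟨r, hAfacts.1.mpr hp1, hBfacts.2.1.mpr hp2⟩
    · exact ⟨q, hAfacts.2.1.mpr hp1, hBfacts.1.mpr hp2⟩
    · exact ⟨t, hAfacts.2.2.mpr hp1, hBfacts.2.2.mpr hp2⟩
  obtain ⟨w, hwx, hwy⟩ := hw
  have g1 := grad hmed hxu w
  have g2 := grad hmed huy.symm w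
  have heqxy : G.dist w x = G.dist w y := by omega
  have hdxy : G.dist x y = 2 := dist_two_s4 hmed hxu huy hxy_ne
  obtain ⟨m, hxm, hym, hm⟩ := common_nbr hmed hdxy heqxy
  refine ⟨m, huy, hxm, hxu.symm, hym, ?_, Ne.symm hxy_ne⟩
  rintro rfl
  omega

end MedianPaper
end
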